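/- For any hypothesis h and distributions Q, P over X, the error of h on Q is bounded by λ'' + ε_P(h) + (1/2) d_{HΔH}(Q, P), where λ'' is the error of an ideal joint hypothesis minimizing the sum of errors on P and Q. -/
import Mathlib


open MeasureTheory

/-- Error of a binary hypothesis `h` on a distribution `D` over `X` with
labeling function `f`. -/
noncomputable def err {X : Type*} [MeasurableSpace X] (D : Measure X)
    (f h : X → Bool) : ℝ :=
  (D {x | h x ≠ f x}).toReal

/-- The `HΔH`-divergence between two distributions `P` and `Q` over `X`. -/
noncomputable def dHDH {X : Type*} [MeasurableSpace X] (H : Set (X → Bool))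
    (P Q : Measure X) : ℝ :=
  2 * sSup {r : ℝ | ∃ h ∈ H, ∃ h' ∈ H,
    r = |(P {x | h x ≠ h' x}).toReal - (Q {x | h x ≠ h' x}).toReal|}

/-- The error of the ideal joint hypothesis for distributions `P` and `Q`
(with labeling functions `fP`, `fQ`): the infimum over `H` of the sum of the
errors on the two domains. -/
noncomputable def idealJointError {X : Type*} [MeasurableSpace X]
    (H : Set (X → Bool)) (P Q : Measure X) (fP fQ : X → Bool) : ℝ :=
  sInf {r : ℝ | ∃ h ∈ H, r = err P fP h + err Q fQ h}

lemma meas_tri {X : Type*} [MeasurableSpace X] (Q : Measure X)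
    [IsProbabilityMeasure Q] (A B C : Set X) (hsub : A ⊆ B ∪ C) :
    (Q A).toReal ≤ (Q B).toReal + (Q C).toReal := by
  have h1 : Q A ≤ Q B + Q C := (measure_mono hsub).trans (measure_union_le B C)
  calc (Q A).toReal ≤ (Q B + Q C).toReal := by
        apply ENNReal.toReal_mono _ h1
        simp [ENNReal.add_ne_top, measure_ne_top]
    _ = (Q B).toReal + (Q C).toReal :=
        ENNReal.toReal_add (measure_ne_top Q B) (measure_ne_top Q C)

/-- Single-source domain adaptation bound (Ben-David et al.): for any `h ∈ H`,
`ε_Q(h) ≤ λ'' + ε_P(h) + (1/2) d_{HΔH}(Q, P)`. -/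
theorem single_source_da_bound {X : Type*} [MeasurableSpace X]
    (H : Set (X → Bool)) (P Q : Measure X)
    [IsProbabilityMeasure P] [IsProbabilityMeasure Q]
    (fP fQ : X → Bool) :
    ∀ h ∈ H, err Q fQ h ≤
      idealJointError H P Q fP fQ + err P fP h + (1 / 2) * dHDH H Q P := by
  intro h hh
  have key : ∀ h'' ∈ H, err Q fQ h ≤
      (err P fP h'' + err Q fQ h'') + err P fP h + (1 / 2) * dHDH H Q P := by
    intro h'' hh''
    set A := {x | h x ≠ h'' x} with hA
    have t1 : err Q fQ h ≤ err Q fQ h'' + (Q A).toReal := by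
      apply meas_tri
      intro x hx
      simp only [Set.mem_setOf_eq, Set.mem_union, hA] at *
      by_cases hc : h'' x = fQ x
      · right; intro he; exact hx (he.trans hc)
      · left; exact hc
    have t2 : (P A).toReal ≤ err P fP h + err P fP h'' := by
      apply meas_tri
      intro x hx
      simp only [Set.mem_setOf_eq, Set.mem_union, hA] at *
      by_cases hc : h x = fP x
      · right; intro he; exact hx (hc.trans he.symm)
      · left; exact hc
    have t3 : |(Q A).toReal - (P A).toReal| ≤ (1 / 2) * dHDH H Q P := by
      unfold dHDH
      rw [show (1:ℝ)/2 * (2 * sSup _) = sSup _ by ring]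
      apply le_csSup
      · refine ⟨2, ?_⟩
        rintro r ⟨g, -, g', -, rfl⟩
        have h1 : (Q {x | g x ≠ g' x}).toReal ≤ 1 := by
          apply ENNReal.toReal_le_of_le_ofReal one_pos.le
          simpa using prob_le_one
        have h2 : (P {x | g x ≠ g' x}).toReal ≤ 1 := by
          apply ENNReal.toReal_le_of_le_ofReal one_pos.le
          simpa using prob_le_one
        have h3 : (0:ℝ) ≤ (Q {x | g x ≠ g' x}).toReal := ENNReal.toReal_nonneg
        have h4 : (0:ℝ) ≤ (P {x | g x ≠ g' x}).toReal := ENNReal.toReal_nonneg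
        rw [abs_le]; constructor <;> linarith
      · exact ⟨h, hh, h'', hh'', rfl⟩
    have t4 : (Q A).toReal - (P A).toReal ≤ |(Q A).toReal - (P A).toReal| :=
      le_abs_self _
    linarith
  have hS : ({r : ℝ | ∃ h'' ∈ H, r = err P fP h'' + err Q fQ h''}).Nonempty :=
    ⟨_, h, hh, rfl⟩
  have hle : err Q fQ h - err P fP h - (1 / 2) * dHDH H Q P ≤
      idealJointError H P Q fP fQ := by
    apply le_csInf hS
    rintro r ⟨h'', hh'', rfl⟩
    have := key h'' hh''
    linarith
  linarith
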